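/- Let n ≥ k ≥ 3 and k > k' ≥ 1, and let T be a tree of order n. Then Sd_k(T) ≤ (k / (k − k')) · Sr_{k,k'}(T). -/

import Mathlib

open SimpleGraph

/-- The Steiner distance of a vertex set `S` in `G`: the minimum number of edges of a
connected subgraph of `G` whose vertex set contains `S`. -/
noncomputable def steinerDist {V : Type*} (G : SimpleGraph V) (S : Finset V) : ℕ :=
  sInf {n | ∃ H : G.Subgraph, H.Connected ∧ ↑S ⊆ H.verts ∧ H.edgeSet.ncard = n}

/-- The Steiner `k`-diameter of `G`: the maximum Steiner distance over `k`-subsets. -/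
noncomputable def steinerDiam {V : Type*} [Fintype V] [DecidableEq V]
    (G : SimpleGraph V) (k : ℕ) : ℕ :=
  Finset.sup (Finset.univ.filter fun S : Finset V => S.card = k) (steinerDist G)

/-- The Steiner `(k,k')`-eccentricity of a `k'`-subset `S'`. -/
noncomputable def steinerEcc {V : Type*} [Fintype V] [DecidableEq V]
    (G : SimpleGraph V) (k : ℕ) (S' : Finset V) : ℕ :=
  Finset.sup (Finset.univ.filter fun S : Finset V => S.card = k ∧ S' ⊆ S) (steinerDist G)

/-- The Steiner `(k,k')`-radius of `G`. -/
noncomputable def steinerRadius {V : Type*} [Fintype V] [DecidableEq V]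
    (G : SimpleGraph V) (k k' : ℕ) : ℕ :=
  sInf {n | ∃ S' : Finset V, S'.card = k' ∧ steinerEcc G k S' = n}

/-- The diameter of `G`: the maximum distance between two vertices. -/
noncomputable def gDiam {V : Type*} [Fintype V] (G : SimpleGraph V) : ℕ :=
  Finset.sup Finset.univ (fun p : V × V => G.dist p.1 p.2)

/-- The number of pendant vertices (leaves) of `G`. -/
noncomputable def leafCount {V : Type*} [Fintype V] [DecidableEq V]
    (G : SimpleGraph V) [DecidableRel G.Adj] : ℕ :=
  (Finset.univ.filter fun v => G.degree v = 1).card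

namespace Stmt17Aux

open SimpleGraph Finset

variable {V : Type*} {G : SimpleGraph V}

/-- A closed walk based at `w` visiting all vertices of a list. -/
def loopWalk (G : SimpleGraph V) (w : V) (p : ∀ s : V, G.Walk w s) : List V → G.Walk w w
  | [] => Walk.nil
  | s :: l => ((p s).append (p s).reverse).append (loopWalk G w p l)

lemma mem_support_loopWalk {w : V} (p : ∀ s, G.Walk w s) {l : List V} {s : V} (hs : s ∈ l) :
    s ∈ (loopWalk G w p l).support := by
  induction l with
  | nil => simp at hs
  | cons a l ih =>
    rcases List.mem_cons.mp hs with h | h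
    · subst h
      simp only [loopWalk, Walk.mem_support_append_iff]
      exact Or.inl (Or.inl (Walk.end_mem_support _))
    · simp only [loopWalk, Walk.mem_support_append_iff]
      exact Or.inr (ih h)

lemma edges_loopWalk {w : V} (p : ∀ s, G.Walk w s) {l : List V} {e : Sym2 V}
    (he : e ∈ (loopWalk G w p l).edges) : ∃ s ∈ l, e ∈ (p s).edges := by
  induction l with
  | nil => simp [loopWalk] at he
  | cons a l ih =>
    simp only [loopWalk, Walk.edges_append, Walk.edges_reverse, List.mem_append,
      List.mem_reverse] at he
    rcases he with (h | h) | h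
    · exact ⟨a, List.mem_cons_self, h⟩
    · exact ⟨a, List.mem_cons_self, h⟩
    · obtain ⟨s, hs, h⟩ := ih h
      exact ⟨s, List.mem_cons_of_mem _ hs, h⟩

variable [Fintype V] [DecidableEq V] {w : V}

/-- The finset of edges of the chosen paths from `w` to vertices of `X`. -/
def FE (P : ∀ s : V, G.Walk w s) (X : Finset V) : Finset (Sym2 V) :=
  X.biUnion fun s => (P s).edges.toFinset

lemma exists_subgraph (P : ∀ s : V, G.Walk w s) (X : Finset V) :
    ∃ H : G.Subgraph, H.Connected ∧ ↑X ⊆ H.verts ∧ H.edgeSet.ncard ≤ (FE P X).card := by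
  refine ⟨(loopWalk G w P X.toList).toSubgraph, Walk.toSubgraph_connected _, ?_, ?_⟩
  · intro s hs
    rw [Walk.mem_verts_toSubgraph]
    exact mem_support_loopWalk _ (by simpa using hs)
  · have hsub : (loopWalk G w P X.toList).toSubgraph.edgeSet ⊆ ↑(FE P X) := by
      intro e he
      rw [Walk.mem_edges_toSubgraph] at he
      obtain ⟨s, hs, h⟩ := edges_loopWalk _ he
      exact Finset.mem_coe.mpr (Finset.mem_biUnion.mpr
        ⟨s, by simpa using hs, List.mem_toFinset.mpr h⟩)
    calc (loopWalk G w P X.toList).toSubgraph.edgeSet.ncard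
        ≤ (↑(FE P X) : Set (Sym2 V)).ncard := Set.ncard_le_ncard hsub (Set.toFinite _)
      _ = (FE P X).card := Set.ncard_coe_finset _

lemma steiner_nonempty (P : ∀ s : V, G.Walk w s) (X : Finset V) :
    {n | ∃ H : G.Subgraph, H.Connected ∧ ↑X ⊆ H.verts ∧ H.edgeSet.ncard = n}.Nonempty := by
  obtain ⟨H, h1, h2, _⟩ := exists_subgraph P X
  exact ⟨_, H, h1, h2, rfl⟩

lemma steinerDist_le (P : ∀ s : V, G.Walk w s) (X : Finset V) :
    steinerDist G X ≤ (FE P X).card := by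
  obtain ⟨H, h1, h2, h3⟩ := exists_subgraph P X
  exact le_trans (Nat.sInf_le ⟨H, h1, h2, rfl⟩) h3

lemma steinerDist_mono (P : ∀ s : V, G.Walk w s) (X Y : Finset V) (hXY : X ⊆ Y) :
    steinerDist G X ≤ steinerDist G Y := by
  refine le_csInf (steiner_nonempty P Y) ?_
  rintro n ⟨H, h1, h2, rfl⟩
  exact Nat.sInf_le ⟨H, h1, Set.Subset.trans (Finset.coe_subset.mpr hXY) h2, rfl⟩

lemma forced (ha : G.IsAcyclic) {s : V} (p : G.Walk w s) (hp : p.IsPath)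
    {H : G.Subgraph} (hH : H.Connected) (hw : w ∈ H.verts) (hs : s ∈ H.verts)
    {e : Sym2 V} (he : e ∈ p.edges) : e ∈ H.edgeSet := by
  obtain ⟨q0⟩ := hH.coe.preconnected ⟨w, hw⟩ ⟨s, hs⟩
  set q : G.Walk w s := q0.map H.hom with hq
  have huniq := ha.path_unique (⟨p, hp⟩ : G.Path w s) q.toPath
  have hpq : p = (q.toPath : G.Walk w s) := congrArg (fun r : G.Path w s => (r : G.Walk w s)) huniq
  have hqe : e ∈ q.edges := Walk.edges_toPath_subset q (hpq ▸ he)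
  replace hqe : e ∈ (q0.map H.hom).edges := hqe
  rw [Walk.edges_map] at hqe
  obtain ⟨e', he', rfl⟩ := List.mem_map.mp hqe
  have hmem : e' ∈ H.coe.edgeSet := q0.edges_subset_edgeSet he'
  revert hmem
  induction e' using Sym2.ind with
  | _ a b =>
    intro hmem
    have hadj : H.coe.Adj a b := (SimpleGraph.mem_edgeSet H.coe).mp hmem
    have : H.Adj ↑a ↑b := hadj
    rw [Sym2.map_pair_eq, Subgraph.mem_edgeSet]
    exact this

lemma card_FE_le (ha : G.IsAcyclic) (P : ∀ s : V, G.Walk w s) (hP : ∀ s, (P s).IsPath)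
    (X Y : Finset V) (hw : w ∈ Y) (hXY : X ⊆ Y) :
    (FE P X).card ≤ steinerDist G Y := by
  refine le_csInf (steiner_nonempty P Y) ?_
  rintro n ⟨H, h1, h2, rfl⟩
  have hsub : ↑(FE P X) ⊆ H.edgeSet := by
    intro e he
    obtain ⟨s, hs, he'⟩ := Finset.mem_biUnion.mp (Finset.mem_coe.mp he)
    exact forced ha (P s) (hP s) h1 (h2 (Finset.mem_coe.mpr hw))
      (h2 (Finset.mem_coe.mpr (hXY hs))) (List.mem_toFinset.mp he')
  calc (FE P X).card = (↑(FE P X) : Set (Sym2 V)).ncard := (Set.ncard_coe_finset _).symm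
    _ ≤ H.edgeSet.ncard := Set.ncard_le_ncard hsub (Set.toFinite _)

lemma card_filter_mem (S : Finset V) {s : V} (hs : s ∈ S) (j : ℕ) (hj : 1 ≤ j) :
    ((S.powersetCard j).filter fun A => s ∈ A).card = (S.card - 1).choose (j - 1) := by
  rw [← Finset.card_erase_of_mem hs, ← Finset.card_powersetCard (j - 1) (S.erase s)]
  apply Finset.card_bij (fun A _ => A.erase s)
  · intro A hA
    simp only [Finset.mem_filter, Finset.mem_powersetCard] at hA
    exact Finset.mem_powersetCard.mpr
      ⟨Finset.erase_subset_erase _ hA.1.1, by rw [Finset.card_erase_of_mem hA.2, hA.1.2]⟩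
  · intro A hA B hB hAB
    simp only [Finset.mem_filter] at hA hB
    rw [← Finset.insert_erase hA.2, ← Finset.insert_erase hB.2, hAB]
  · intro B hB
    obtain ⟨hBsub, hBcard⟩ := Finset.mem_powersetCard.mp hB
    have hsB : s ∉ B := fun h => Finset.notMem_erase s S (hBsub h)
    refine ⟨insert s B, ?_, ?_⟩
    · simp only [Finset.mem_filter, Finset.mem_powersetCard]
      refine ⟨⟨Finset.insert_subset hs (hBsub.trans (Finset.erase_subset _ _)), ?_⟩,
        Finset.mem_insert_self _ _⟩
      rw [Finset.card_insert_of_notMem hsB, hBcard]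
      omega
    · rw [Finset.erase_insert hsB]

end Stmt17Aux

open Stmt17Aux Finset in
theorem stmt17 {V : Type*} [Fintype V] [DecidableEq V] (G : SimpleGraph V)
    (hT : G.IsTree) (n k k' : ℕ) (hn : Fintype.card V = n)
    (hk : 3 ≤ k) (hkn : k ≤ n) (hk' : 1 ≤ k') (hk'k : k' < k) :
    (steinerDiam G k : ℝ) ≤ (k / ((k : ℝ) - k')) * steinerRadius G k k' := by
  classical
  set j := k - k' with hj
  have hj1 : 1 ≤ j := by omega
  have hcardV : (Finset.univ : Finset V).card = n := by rw [Finset.card_univ, hn]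
  -- choose a k'-set W achieving the radius
  have hRne : {m | ∃ S' : Finset V, S'.card = k' ∧ steinerEcc G k S' = m}.Nonempty := by
    obtain ⟨W, _, hWcard⟩ := Finset.exists_subset_card_eq
      (show k' ≤ (Finset.univ : Finset V).card by omega)
    exact ⟨_, W, hWcard, rfl⟩
  set r := steinerRadius G k k' with hr
  obtain ⟨W, hWcard, hWecc⟩ := Nat.sInf_mem hRne
  have hWecc' : steinerEcc G k W = r := hWecc
  obtain ⟨w, hwW⟩ := Finset.card_pos.mp (show 0 < W.card by omega)
  -- canonical paths from w
  have hreach := hT.isConnected.preconnected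
  set P : ∀ s : V, G.Walk w s := fun s => ((hreach w s).some.toPath : G.Walk w s) with hPdef
  have hPp : ∀ s, (P s).IsPath := fun s => ((hreach w s).some.toPath).2
  -- key bound for every k-set
  have key : ∀ S : Finset V, S.card = k → j * steinerDist G S ≤ k * r := by
    intro S hS
    have h1 : steinerDist G S ≤ (FE P S).card := steinerDist_le P S
    have h2 : ∀ A ∈ S.powersetCard j, (FE P A).card ≤ r := by
      intro A hA
      obtain ⟨hAS, hAcard⟩ := Finset.mem_powersetCard.mp hA
      have hcard : (W ∪ A).card ≤ k := le_trans (Finset.card_union_le _ _) (by omega)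
      obtain ⟨T', hT1, _, hT3⟩ := Finset.exists_subsuperset_card_eq
        (Finset.subset_univ (W ∪ A)) hcard (by omega)
      have hd1 : (FE P A).card ≤ steinerDist G (W ∪ A) :=
        card_FE_le hT.IsAcyclic P hPp A (W ∪ A) (Finset.mem_union_left _ hwW)
          Finset.subset_union_right
      have hd2 : steinerDist G (W ∪ A) ≤ steinerDist G T' := steinerDist_mono P _ _ hT1
      have hd3 : steinerDist G T' ≤ steinerEcc G k W :=
        Finset.le_sup (by
          simp only [Finset.mem_filter, Finset.mem_univ, true_and]
          exact ⟨hT3, (Finset.subset_union_left).trans hT1⟩)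
      omega
    have h3 : (k - 1).choose (j - 1) * (FE P S).card
        ≤ ∑ A ∈ S.powersetCard j, (FE P A).card := by
      have hsub : ∀ A ∈ S.powersetCard j, FE P A ⊆ FE P S := fun A hA =>
        Finset.biUnion_subset_biUnion_of_subset_left _ (Finset.mem_powersetCard.mp hA).1
      have hswap : ∑ A ∈ S.powersetCard j, (FE P A).card
          = ∑ e ∈ FE P S, ((S.powersetCard j).filter fun A => e ∈ FE P A).card := by
        calc ∑ A ∈ S.powersetCard j, (FE P A).card
            = ∑ A ∈ S.powersetCard j, ∑ e ∈ FE P S, if e ∈ FE P A then 1 else 0 := by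
              refine Finset.sum_congr rfl fun A hA => ?_
              rw [← Finset.card_filter]
              rw [Finset.filter_mem_eq_inter, Finset.inter_eq_right.mpr (hsub A hA)]
          _ = ∑ e ∈ FE P S, ∑ A ∈ S.powersetCard j, if e ∈ FE P A then 1 else 0 :=
              Finset.sum_comm
          _ = _ := by
              refine Finset.sum_congr rfl fun e _ => ?_
              rw [Finset.card_filter]
      rw [hswap]
      have hterm : ∀ e ∈ FE P S,
          (k - 1).choose (j - 1) ≤ ((S.powersetCard j).filter fun A => e ∈ FE P A).card := by
        intro e he
        obtain ⟨s, hsS, hse⟩ := Finset.mem_biUnion.mp he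
        have hmono : ((S.powersetCard j).filter fun A => s ∈ A)
            ⊆ ((S.powersetCard j).filter fun A => e ∈ FE P A) := by
          intro A hA
          simp only [Finset.mem_filter] at *
          exact ⟨hA.1, Finset.mem_biUnion.mpr ⟨s, hA.2, hse⟩⟩
        calc (k - 1).choose (j - 1) = (S.card - 1).choose (j - 1) := by rw [hS]
          _ = ((S.powersetCard j).filter fun A => s ∈ A).card :=
              (card_filter_mem S hsS j hj1).symm
          _ ≤ _ := Finset.card_le_card hmono
      calc (k - 1).choose (j - 1) * (FE P S).card
          = ∑ _e ∈ FE P S, (k - 1).choose (j - 1) := by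
            rw [Finset.sum_const, smul_eq_mul, mul_comm]
        _ ≤ _ := Finset.sum_le_sum hterm
    have h4 : ∑ A ∈ S.powersetCard j, (FE P A).card ≤ k.choose j * r := by
      calc ∑ A ∈ S.powersetCard j, (FE P A).card ≤ ∑ _A ∈ S.powersetCard j, r :=
            Finset.sum_le_sum h2
        _ = (S.powersetCard j).card * r := by rw [Finset.sum_const, smul_eq_mul]
        _ = k.choose j * r := by rw [Finset.card_powersetCard, hS]
    have hid : k * (k - 1).choose (j - 1) = k.choose j * j := by
      have h := Nat.add_one_mul_choose_eq (k - 1) (j - 1)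
      have e1 : k - 1 + 1 = k := by omega
      have e2 : j - 1 + 1 = j := by omega
      simp only [Nat.succ_eq_add_one, e1, e2] at h
      exact h
    have hcpos : 0 < (k - 1).choose (j - 1) := Nat.choose_pos (by omega)
    have h5 : (k - 1).choose (j - 1) * (j * (FE P S).card)
        ≤ (k - 1).choose (j - 1) * (k * r) := by
      calc (k - 1).choose (j - 1) * (j * (FE P S).card)
          = j * ((k - 1).choose (j - 1) * (FE P S).card) := by ring
        _ ≤ j * (k.choose j * r) := Nat.mul_le_mul_left _ (le_trans h3 h4)
        _ = (k.choose j * j) * r := by ring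
        _ = (k * (k - 1).choose (j - 1)) * r := by rw [hid]
        _ = (k - 1).choose (j - 1) * (k * r) := by ring
    have h6 : j * (FE P S).card ≤ k * r := Nat.le_of_mul_le_mul_left h5 hcpos
    calc j * steinerDist G S ≤ j * (FE P S).card := Nat.mul_le_mul_left _ h1
      _ ≤ k * r := h6
  -- bound the diameter
  have hfilter_ne : (Finset.univ.filter fun S : Finset V => S.card = k).Nonempty := by
    obtain ⟨S, _, hScard⟩ := Finset.exists_subset_card_eq
      (show k ≤ (Finset.univ : Finset V).card by omega)
    exact ⟨S, by simp [hScard]⟩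
  obtain ⟨S₀, hS₀, hsup⟩ := Finset.exists_mem_eq_sup _ hfilter_ne (steinerDist G)
  have hD : j * steinerDiam G k ≤ k * r := by
    rw [steinerDiam, hsup]
    exact key S₀ (Finset.mem_filter.mp hS₀).2
  -- transfer to the reals
  have hjR : ((k : ℝ) - k') = (j : ℝ) := by
    rw [hj]; push_cast [Nat.cast_sub hk'k.le]; ring
  have hjpos : (0 : ℝ) < (j : ℝ) := by exact_mod_cast hj1
  rw [hjR, div_mul_eq_mul_div, le_div_iff₀ hjpos]
  calc (steinerDiam G k : ℝ) * j = ((j * steinerDiam G k : ℕ) : ℝ) := by push_cast; ring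
    _ ≤ ((k * r : ℕ) : ℝ) := by exact_mod_cast hD
    _ = (k : ℝ) * r := by push_cast; ring
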